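/- Every irreducible finite-dimensional complex representation of a product G × H of two finite groups is isomorphic to an external tensor product V ⊠ W, where V is an irreducible representation of G and W is an irreducible representation of H. -/

import Mathlib

/-- A representation is irreducible if the space is nonzero and the only
invariant submodules are `⊥` and `⊤`. -/
def Representation.IsIrreducible' {k G V : Type*} [CommSemiring k] [Monoid G]
    [AddCommMonoid V] [Module k V] (ρ : Representation k G V) : Prop :=
  Nontrivial V ∧ ∀ U : Submodule k V, (∀ (g : G), ∀ v ∈ U, ρ g v ∈ U) → U = ⊥ ∨ U = ⊤

/-- Two representations are isomorphic if there is an equivariant linear equivalence. -/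
def Representation.Iso {k G V W : Type*} [CommSemiring k] [Monoid G] [AddCommMonoid V]
    [Module k V] [AddCommMonoid W] [Module k W] (ρ : Representation k G V)
    (σ : Representation k G W) : Prop :=
  ∃ e : V ≃ₗ[k] W, ∀ (g : G) (v : V), e (ρ g v) = σ g (e v)

/-- The external tensor product of a representation of `G` and a representation of `H`:
the vector space `V ⊗ W` with `(g, h)` acting by `g ⊗ h`. -/
noncomputable def Representation.extTprod {k G H V W : Type*} [CommSemiring k] [Monoid G] [Monoid H]
    [AddCommMonoid V] [Module k V] [AddCommMonoid W] [Module k W]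
    (σ : Representation k G V) (τ : Representation k H W) :
    Representation k (G × H) (TensorProduct k V W) :=
  Representation.tprod (σ.comp (MonoidHom.fst G H)) (τ.comp (MonoidHom.snd G H))


open Module LinearMap

namespace ProdRep

variable {G : Type} [Group G] {M : Type} [AddCommGroup M] [Module ℂ M]

/-- invariance of a submodule -/
def Inv (ρ : Representation ℂ G M) (U : Submodule ℂ M) : Prop :=
  ∀ (g : G), ∀ v ∈ U, ρ g v ∈ U

/-- restriction of a representation to an invariant submodule -/
def subRep (ρ : Representation ℂ G M) (U : Submodule ℂ M) (hU : Inv ρ U) :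
    Representation ℂ G U where
  toFun g := (ρ g).restrict (hU g)
  map_one' := by ext v; simp [LinearMap.restrict_apply]
  map_mul' g g' := by ext v; simp [LinearMap.restrict_apply]

@[simp] lemma subRep_apply (ρ : Representation ℂ G M) (U : Submodule ℂ M) (hU : Inv ρ U)
    (g : G) (v : U) : (subRep ρ U hU g v : M) = ρ g v := rfl

/-- Schur: an equivariant endomorphism of an irreducible f.d. complex rep is scalar -/
lemma schur {V : Type} [AddCommGroup V] [Module ℂ V] [FiniteDimensional ℂ V]
    (σ : Representation ℂ G V) (hσ : σ.IsIrreducible') (φ : V →ₗ[ℂ] V)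
    (hφ : ∀ g v, φ (σ g v) = σ g (φ v)) : ∃ c : ℂ, ∀ v, φ v = c • v := by
  have : Nontrivial V := hσ.1
  obtain ⟨c, hc⟩ := Module.End.exists_eigenvalue (φ : Module.End ℂ V)
  refine ⟨c, fun v => ?_⟩
  have hK : Inv σ (Module.End.eigenspace (φ : Module.End ℂ V) c) := by
    intro g v hv
    rw [Module.End.mem_eigenspace_iff] at hv ⊢
    rw [hφ, hv, map_smul]
  rcases hσ.2 _ hK with h | h
  · exact absurd h hc
  · have : v ∈ Module.End.eigenspace (φ : Module.End ℂ V) c := h ▸ Submodule.mem_top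
    rwa [Module.End.mem_eigenspace_iff] at this

end ProdRep
namespace ProdRep
variable {G : Type} [Group G] {M : Type} [AddCommGroup M] [Module ℂ M]

/-- Maschke: an invariant submodule has an invariant complement. -/
lemma exists_inv_isCompl [Fintype G] (ρ : Representation ℂ G M)
    (U : Submodule ℂ M) (hU : Inv ρ U) : ∃ C : Submodule ℂ M, Inv ρ C ∧ IsCompl U C := by
  obtain ⟨C0, hC0⟩ := U.exists_isCompl
  set p0 : M →ₗ[ℂ] M := U.subtype ∘ₗ U.projectionOnto C0 hC0 with hp0
  set P : M →ₗ[ℂ] M :=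
    ((Fintype.card G : ℂ)⁻¹) • ∑ g : G, (ρ g) ∘ₗ p0 ∘ₗ (ρ g⁻¹) with hP
  have card_ne : (Fintype.card G : ℂ) ≠ 0 := by
    exact_mod_cast Nat.cast_ne_zero.mpr Fintype.card_ne_zero
  have hmem : ∀ m, P m ∈ U := by
    intro m
    rw [hP]
    simp only [LinearMap.smul_apply, LinearMap.sum_apply, LinearMap.comp_apply]
    refine Submodule.smul_mem _ _ (Submodule.sum_mem _ fun g _ => ?_)
    exact hU g _ (Submodule.coe_mem _)
  have hid : ∀ m ∈ U, P m = m := by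
    intro m hm
    rw [hP]
    simp only [LinearMap.smul_apply, LinearMap.sum_apply, LinearMap.comp_apply]
    have : ∀ g : G, ρ g (p0 (ρ g⁻¹ m)) = m := by
      intro g
      have h1 : ρ g⁻¹ m ∈ U := hU g⁻¹ m hm
      have hh : p0 (ρ g⁻¹ m) = ρ g⁻¹ m := by
        rw [hp0]
        simp only [LinearMap.comp_apply]
        rw [show ρ g⁻¹ m = ((⟨ρ g⁻¹ m, h1⟩ : U) : M) from rfl,
          Submodule.projectionOnto_apply_left]
        rfl
      rw [hh, ← Module.End.mul_apply, ← map_mul, mul_inv_cancel, map_one, Module.End.one_apply]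
    rw [Finset.sum_congr rfl fun g _ => this g, Finset.sum_const, Finset.card_univ,
      ← Nat.cast_smul_eq_nsmul ℂ, smul_smul, inv_mul_cancel₀ card_ne, one_smul]
  have hequi : ∀ (h : G) (m : M), P (ρ h m) = ρ h (P m) := by
    intro h m
    rw [hP]
    simp only [LinearMap.smul_apply, LinearMap.sum_apply, LinearMap.comp_apply]
    rw [map_smul, map_sum]
    congr 1
    refine (Fintype.sum_equiv (Equiv.mulLeft h) _ _ fun g => ?_).symm
    simp only [Equiv.coe_mulLeft, mul_inv_rev, map_mul, Module.End.mul_apply]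
    rw [← Module.End.mul_apply (ρ h⁻¹) (ρ h), ← map_mul, inv_mul_cancel, map_one,
      Module.End.one_apply]
  refine ⟨LinearMap.ker P, fun g v hv => ?_, ?_⟩
  · rw [LinearMap.mem_ker] at hv ⊢
    rw [hequi, hv, map_zero]
  · constructor
    · rw [Submodule.disjoint_def]
      intro x hxU hxK
      rw [LinearMap.mem_ker] at hxK
      rw [← hid x hxU, hxK]
    · rw [codisjoint_iff, Submodule.eq_top_iff']
      intro m
      have h1 : P m ∈ U := hmem m
      have h2 : m - P m ∈ LinearMap.ker P := by
        rw [LinearMap.mem_ker, map_sub, hid _ h1, sub_self]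
      have hm : m = P m + (m - P m) := by abel
      rw [hm]
      exact Submodule.add_mem _ (Submodule.mem_sup_left h1) (Submodule.mem_sup_right h2)

end ProdRep
namespace ProdRep

lemma key {G : Type} [Group G] [Fintype G] {V : Type} [AddCommGroup V] [Module ℂ V]
    [FiniteDimensional ℂ V] (σ : Representation ℂ G V) (hσ : σ.IsIrreducible') :
    ∀ (n : ℕ) (M : Type) [AddCommGroup M] [Module ℂ M] [FiniteDimensional ℂ M]
      (ρ : Representation ℂ G M), Module.finrank ℂ M ≤ n →
      ∀ (k : ℕ) (f : Fin k → (V →ₗ[ℂ] M)), LinearIndependent ℂ f →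
      (∀ i g v, f i (σ g v) = ρ g (f i v)) →
      ∀ v : Fin k → V, (∑ i, f i (v i)) = 0 → ∀ i, v i = 0 := by
  intro n
  induction n with
  | zero =>
    intro M _ _ _ ρ hrank k f hli hequi v hsum i
    have : Module.finrank ℂ M = 0 := Nat.le_zero.mp hrank
    have hsub : Subsingleton M := (Module.finrank_zero_iff).mp this
    exact absurd (LinearMap.ext fun w => Subsingleton.elim _ _) (hli.ne_zero i)
  | succ n ih =>
    intro M _ _ _ ρ hrank k f hli hequi v hsum i
    have hVnt : Nontrivial V := hσ.1
    match k, f, hli, hequi, v, hsum, i with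
    | 0, f, hli, hequi, v, hsum, i => exact i.elim0
    | k + 1, f, hli, hequi, v, hsum, i => ?_
    -- f 0 is injective
    have hne : f 0 ≠ 0 := hli.ne_zero 0
    have hker : LinearMap.ker (f 0) = ⊥ := by
      rcases hσ.2 (LinearMap.ker (f 0)) (fun g w hw => by
        rw [LinearMap.mem_ker] at hw ⊢
        rw [hequi 0 g w, hw, map_zero]) with h | h
      · exact h
      · exact absurd (LinearMap.ker_eq_top.mp h) hne
    have finj : Function.Injective (f 0) := LinearMap.ker_eq_bot.mp hker
    set M' : Submodule ℂ M := LinearMap.range (f 0) with hM'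
    have hM'inv : Inv ρ M' := by
      rintro g x ⟨w, rfl⟩
      exact ⟨σ g w, (hequi 0 g w)⟩
    obtain ⟨C, hCinv, hcompl⟩ := exists_inv_isCompl ρ M' hM'inv
    set p : M →ₗ[ℂ] M := M'.subtype ∘ₗ M'.projectionOnto C hcompl with hp
    have hpmem : ∀ m, p m ∈ M' := fun m => Submodule.coe_mem _
    have hpid : ∀ m ∈ M', p m = m := by
      intro m hm
      rw [hp]
      simp only [LinearMap.comp_apply]
      rw [show m = ((⟨m, hm⟩ : M') : M) from rfl, Submodule.projectionOnto_apply_left]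
      rfl
    have hpC : ∀ m, p m = 0 ↔ m ∈ C := by
      intro m
      rw [hp]
      simp only [LinearMap.comp_apply]
      constructor
      · intro h
        have : M'.projectionOnto C hcompl m = 0 := by
          exact Subtype.ext_iff.mpr h
        exact (Submodule.projectionOnto_apply_eq_zero_iff hcompl).mp this
      · intro h
        rw [Submodule.projectionOnto_apply_of_mem_right hcompl h]
        rfl
    have hsubC : ∀ m, m - p m ∈ C := by
      intro m
      rw [← hpC, map_sub, hpid _ (hpmem m), sub_self]
    have hpequi : ∀ g m, p (ρ g m) = ρ g (p m) := by
      intro g m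
      conv_lhs => rw [show m = p m + (m - p m) by abel]
      rw [map_add, map_add, hpid _ (hM'inv g _ (hpmem m)),
        (hpC _).mpr (hCinv g _ (hsubC m)), add_zero]
    -- Schur: p ∘ f i = c i • f 0
    have hschur : ∀ i : Fin (k + 1), ∃ c : ℂ, ∀ w, p (f i w) = c • f 0 w := by
      intro j
      set e := LinearEquiv.ofInjective (f 0) finj with he
      set φ : V →ₗ[ℂ] V := (e.symm : M' →ₗ[ℂ] V) ∘ₗ
        LinearMap.codRestrict M' (p ∘ₗ f j) (fun w => hpmem _) with hφ
      have hfφ : ∀ w, f 0 (φ w) = p (f j w) := by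
        intro w
        have h1 : e (φ w) = LinearMap.codRestrict M' (p ∘ₗ f j) (fun w => hpmem _) w := by
          rw [hφ]; simp
        have h2 : (e (φ w) : M) = f 0 (φ w) := by
          rw [he]; rfl
        rw [← h2, h1]; rfl
      have hφequi : ∀ g w, φ (σ g w) = σ g (φ w) := by
        intro g w
        apply finj
        rw [hfφ, hequi, hpequi, ← hfφ, ← hequi]
      obtain ⟨c, hc⟩ := schur σ hσ φ hφequi
      exact ⟨c, fun w => by rw [← hfφ, hc, map_smul]⟩
    choose c hc using hschur
    -- the family into C
    have hFmem : ∀ (j : Fin (k + 1)) (w : V), f j w - p (f j w) ∈ C := fun j w => hsubC _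
    set F : Fin k → (V →ₗ[ℂ] C) := fun i =>
      LinearMap.codRestrict C (f i.succ - p ∘ₗ f i.succ) (fun w => hFmem i.succ w) with hF
    have hFval : ∀ (i : Fin k) (w : V), (F i w : M) = f i.succ w - p (f i.succ w) := by
      intro i w; rw [hF]; rfl
    have hFli : LinearIndependent ℂ F := by
      rw [Fintype.linearIndependent_iff]
      intro a ha
      have ha' : ∑ i : Fin k, a i • (f i.succ - (c i.succ) • f 0) = 0 := by
        have : ∀ i : Fin k, f i.succ - p ∘ₗ f i.succ = f i.succ - (c i.succ) • f 0 := by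
          intro i; ext w
          simp [hc i.succ w]
        apply LinearMap.ext
        intro w
        have := congrArg (fun (x : C) => (x : M)) (congrFun (congrArg DFunLike.coe ha) w)
        simp only [LinearMap.zero_apply, Submodule.coe_zero] at this ⊢
        rw [LinearMap.sum_apply] at this ⊢
        simp only [Submodule.coe_sum, LinearMap.smul_apply, Submodule.coe_smul] at this
        simp only [LinearMap.smul_apply, LinearMap.zero_apply]
        calc ∑ x : Fin k, a x • (f x.succ - c x.succ • f 0) w
            = ∑ x : Fin k, a x • ((F x w : M)) := by
              refine Finset.sum_congr rfl fun x _ => ?_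
              rw [hFval]
              simp [hc x.succ w]
          _ = 0 := this
      set b : Fin (k + 1) → ℂ := Fin.cases (- ∑ i : Fin k, a i * c i.succ) a with hb
      have hbsum : ∑ j : Fin (k + 1), b j • f j = 0 := by
        rw [Fin.sum_univ_succ]
        simp only [hb, Fin.cases_zero, Fin.cases_succ]
        calc (- ∑ i : Fin k, a i * c i.succ) • f 0 + ∑ i : Fin k, a i • f i.succ
            = ∑ i : Fin k, a i • (f i.succ - (c i.succ) • f 0) := by
              simp only [smul_sub, mul_smul, Finset.sum_sub_distrib, neg_smul, Finset.sum_smul]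
              abel
          _ = 0 := ha'
      have := (Fintype.linearIndependent_iff.mp hli) b hbsum
      intro i
      have := this i.succ
      simpa [hb] using this
    have hFequi : ∀ (i : Fin k) (g : G) (w : V),
        F i (σ g w) = (subRep ρ C hCinv) g (F i w) := by
      intro i g w
      apply Subtype.ext
      rw [hFval]
      simp only [subRep_apply, hFval, map_sub]
      rw [hequi i.succ g w, hpequi]
    -- dimension bound
    have hrankC : Module.finrank ℂ C ≤ n := by
      have h1 : Module.finrank ℂ M' + Module.finrank ℂ C = Module.finrank ℂ M :=
        Submodule.finrank_add_eq_of_isCompl hcompl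
      have h2 : 0 < Module.finrank ℂ M' := by
        have : Nontrivial M' := by
          rcases exists_ne (0 : V) with ⟨w, hw⟩
          refine ⟨⟨f 0 w, ⟨w, rfl⟩⟩, 0, ?_⟩
          intro h
          apply hw
          apply finj
          rw [map_zero]
          simpa using Subtype.ext_iff.mp h
        exact Module.finrank_pos
      omega
    -- apply inductive hypothesis
    have hFsum : ∑ i : Fin k, F i (v i.succ) = 0 := by
      apply Subtype.ext
      rw [Submodule.coe_sum]
      simp only [hFval]
      rw [Finset.sum_sub_distrib, ← map_sum]
      have hx : ∑ i : Fin k, f i.succ (v i.succ) = - f 0 (v 0) := by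
        have h := hsum
        rw [Fin.sum_univ_succ] at h
        exact eq_neg_of_add_eq_zero_right h
      rw [hx, map_neg, hpid _ ⟨v 0, rfl⟩]
      simp
    have hzero := ih C (subRep ρ C hCinv) hrankC k F hFli hFequi (fun i => v i.succ) hFsum
    -- conclude
    have hv0 : v 0 = 0 := by
      rw [Fin.sum_univ_succ] at hsum
      have : ∀ i : Fin k, f i.succ (v i.succ) = 0 := fun i => by
        have hz : v i.succ = 0 := hzero i
        rw [hz, map_zero]
      rw [Finset.sum_congr rfl (fun x _ => this x), Finset.sum_const_zero, add_zero] at hsum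
      exact finj (by rw [hsum, map_zero])
    refine Fin.cases hv0 hzero i

end ProdRep
namespace ProdRep

variable {G H : Type} [Group G] [Group H] {M : Type} [AddCommGroup M] [Module ℂ M]

/-- restriction of a `G × H` representation to `G` -/
def ρG (ρ : Representation ℂ (G × H) M) : Representation ℂ G M :=
  ρ.comp (MonoidHom.inl G H)

/-- restriction of a `G × H` representation to `H` -/
def ρH (ρ : Representation ℂ (G × H) M) : Representation ℂ H M :=
  ρ.comp (MonoidHom.inr G H)

lemma comm1 (ρ : Representation ℂ (G × H) M) (g : G) (h : H) (m : M) :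
    ρH ρ h (ρG ρ g m) = ρ (g, h) m := by
  rw [ρH, ρG]
  simp only [MonoidHom.comp_apply, MonoidHom.inl_apply, MonoidHom.inr_apply]
  rw [← Module.End.mul_apply, ← map_mul]
  congr 1
  simp
lemma comm2 (ρ : Representation ℂ (G × H) M) (g : G) (h : H) (m : M) :
    ρG ρ g (ρH ρ h m) = ρ (g, h) m := by
  rw [ρH, ρG]
  simp only [MonoidHom.comp_apply, MonoidHom.inl_apply, MonoidHom.inr_apply]
  rw [← Module.End.mul_apply, ← map_mul]
  congr 1
  simp

variable (ρ : Representation ℂ (G × H) M) (V0 : Submodule ℂ M) (hV0 : Inv (ρG ρ) V0)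

/-- the space of `G`-equivariant linear maps `V0 → M` -/
def Wsub : Submodule ℂ (V0 →ₗ[ℂ] M) where
  carrier := {f | ∀ (g : G) (v : V0), f (subRep (ρG ρ) V0 hV0 g v) = ρG ρ g (f v)}
  add_mem' := by
    intro a b ha hb g v
    simp only [LinearMap.add_apply, ha g v, hb g v, map_add]
  zero_mem' := by intro g v; simp
  smul_mem' := by
    intro c a ha g v
    simp only [LinearMap.smul_apply, ha g v, map_smul]

/-- `H` acts on the equivariant maps by postcomposition -/
def τRep : Representation ℂ H (Wsub ρ V0 hV0) where
  toFun h :=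
    { toFun := fun f => ⟨(ρH ρ h) ∘ₗ (f : V0 →ₗ[ℂ] M), by
        intro g v
        simp only [LinearMap.comp_apply]
        rw [f.2 g v, comm1, ← comm2]⟩
      map_add' := fun a b => by apply Subtype.ext; ext v; simp
      map_smul' := fun c a => by apply Subtype.ext; ext v; simp }
  map_one' := by apply LinearMap.ext; intro f; apply Subtype.ext; ext v; simp
  map_mul' h h' := by
    apply LinearMap.ext; intro f; apply Subtype.ext; ext v
    simp only [LinearMap.coe_mk, AddHom.coe_mk, Module.End.mul_apply, LinearMap.comp_apply]
    rw [← Module.End.mul_apply (ρH ρ h), ← map_mul]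

@[simp] lemma τRep_apply (h : H) (f : Wsub ρ V0 hV0) (v : V0) :
    ((τRep ρ V0 hV0 h f : Wsub ρ V0 hV0) : V0 →ₗ[ℂ] M) v = ρH ρ h ((f : V0 →ₗ[ℂ] M) v) := rfl

/-- evaluation map -/
noncomputable def ev : TensorProduct ℂ V0 (Wsub ρ V0 hV0) →ₗ[ℂ] M :=
  TensorProduct.lift (Wsub ρ V0 hV0).subtype.flip

@[simp] lemma ev_tmul (v : V0) (f : Wsub ρ V0 hV0) :
    ev ρ V0 hV0 (v ⊗ₜ f) = (f : V0 →ₗ[ℂ] M) v := rfl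

lemma ev_equi (g : G) (h : H) (x : TensorProduct ℂ V0 (Wsub ρ V0 hV0)) :
    ev ρ V0 hV0 (((subRep (ρG ρ) V0 hV0).extTprod (τRep ρ V0 hV0)) (g, h) x)
      = ρ (g, h) (ev ρ V0 hV0 x) := by
  induction x using TensorProduct.induction_on with
  | zero => simp
  | tmul v f =>
    rw [Representation.extTprod]
    simp only [Representation.tprod_apply, MonoidHom.comp_apply, TensorProduct.map_tmul]
    rw [ev_tmul, ev_tmul, τRep_apply, f.2, comm1]
    rfl
  | add x y hx hy => rw [map_add, map_add, map_add, hx, hy, map_add]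

end ProdRep

set_option maxHeartbeats 1000000 in
set_option synthInstance.maxHeartbeats 200000 in
lemma extTprod_tmul {k G H V W : Type*} [CommSemiring k] [Monoid G] [Monoid H]
    [AddCommMonoid V] [Module k V] [AddCommMonoid W] [Module k W]
    (σ : Representation k G V) (τ : Representation k H W) (g : G) (h : H) (v : V) (w : W) :
    (σ.extTprod τ) (g, h) (v ⊗ₜ w) = σ g v ⊗ₜ[k] τ h w := rfl

set_option maxHeartbeats 1000000 in
set_option synthInstance.maxHeartbeats 200000 in
/-- Every irreducible finite-dimensional complex representation of a product `G × H` of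
finite groups is isomorphic to an external tensor product `V ⊠ W` of an irreducible
representation of `G` and an irreducible representation of `H`. -/
theorem irreducible_of_prod_iso_extTprod {G H M : Type} [Group G] [Fintype G] [Group H]
    [Fintype H] [AddCommGroup M] [Module ℂ M] [FiniteDimensional ℂ M]
    (ρ : Representation ℂ (G × H) M) (hρ : ρ.IsIrreducible') :
    ∃ (V W : Type) (_ : AddCommGroup V) (_ : Module ℂ V) (_ : AddCommGroup W) (_ : Module ℂ W)
      (σ : Representation ℂ G V) (τ : Representation ℂ H W),
      FiniteDimensional ℂ V ∧ FiniteDimensional ℂ W ∧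
      σ.IsIrreducible' ∧ τ.IsIrreducible' ∧ ρ.Iso (σ.extTprod τ) := by
  classical
  have hMnt : Nontrivial M := hρ.1
  -- a minimal nonzero G-invariant subspace
  set S : Set ℕ := {n | ∃ U : Submodule ℂ M,
    ProdRep.Inv (ProdRep.ρG ρ) U ∧ U ≠ ⊥ ∧ Module.finrank ℂ U = n} with hS
  have hSne : S.Nonempty :=
    ⟨_, ⟨⊤, fun g v _ => Submodule.mem_top, top_ne_bot, rfl⟩⟩
  obtain ⟨V0, hV0inv, hV0ne, hV0rank⟩ := Nat.sInf_mem hSne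
  have hmin : ∀ U : Submodule ℂ M, ProdRep.Inv (ProdRep.ρG ρ) U → U ≠ ⊥ →
      Module.finrank ℂ V0 ≤ Module.finrank ℂ U := fun U hU hUne => by
    rw [hV0rank]; exact Nat.sInf_le ⟨U, hU, hUne, rfl⟩
  set σ : Representation ℂ G V0 := ProdRep.subRep (ProdRep.ρG ρ) V0 hV0inv with hσdef
  have hV0nt : Nontrivial V0 := Submodule.nontrivial_iff_ne_bot.mpr hV0ne
  -- σ is irreducible
  have hσ : σ.IsIrreducible' := by
    refine ⟨hV0nt, fun U hU => ?_⟩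
    by_cases hbot : U = ⊥
    · exact Or.inl hbot
    right
    set U' : Submodule ℂ M := U.map V0.subtype with hU'
    have hU'inv : ProdRep.Inv (ProdRep.ρG ρ) U' := by
      rintro g m ⟨u, hu, rfl⟩
      exact ⟨σ g ⟨u.1, u.2⟩, hU g _ hu, rfl⟩
    have hU'ne : U' ≠ ⊥ := by
      obtain ⟨x, hxU, hxne⟩ := (Submodule.ne_bot_iff _).mp hbot
      intro h
      have : (x : M) ∈ U' := ⟨x, hxU, rfl⟩
      rw [h, Submodule.mem_bot] at this
      exact hxne (by exact_mod_cast Subtype.ext this)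
    have h1 : Module.finrank ℂ V0 ≤ Module.finrank ℂ U := by
      have := hmin U' hU'inv hU'ne
      rwa [hU', Submodule.finrank_map_subtype_eq] at this
    exact Submodule.eq_top_of_finrank_eq (le_antisymm (Submodule.finrank_le U) h1)
  set Wt : Submodule ℂ (V0 →ₗ[ℂ] M) := ProdRep.Wsub ρ V0 hV0inv with hWt
  set τ : Representation ℂ H Wt := ProdRep.τRep ρ V0 hV0inv with hτdef
  set ev : TensorProduct ℂ V0 Wt →ₗ[ℂ] M := ProdRep.ev ρ V0 hV0inv with hev
  obtain ⟨v1, hv1⟩ := exists_ne (0 : V0)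
  -- the inclusion is an equivariant map
  have hi0mem : V0.subtype ∈ Wt := fun g v => rfl
  set i0 : Wt := ⟨V0.subtype, hi0mem⟩ with hi0
  have hi0ne : i0 ≠ 0 := by
    intro h
    apply hv1
    have := congrArg (fun (f : Wt) => (f : V0 →ₗ[ℂ] M) v1) h
    simpa [hi0] using this
  have hWnt : Nontrivial Wt := ⟨i0, 0, hi0ne⟩
  -- surjectivity of ev
  have hsurj : LinearMap.range ev = ⊤ := by
    rcases hρ.2 (LinearMap.range ev) (by
      rintro ⟨g, h⟩ m ⟨x, rfl⟩
      exact ⟨(σ.extTprod τ) (g, h) x, ProdRep.ev_equi ρ V0 hV0inv g h x⟩) with h | h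
    · exfalso
      have : ev (v1 ⊗ₜ i0) ∈ LinearMap.range ev := ⟨_, rfl⟩
      rw [h, Submodule.mem_bot] at this
      have : (v1 : M) = 0 := this
      exact hv1 (by exact_mod_cast Subtype.ext this)
    · exact h
  -- injectivity of ev
  have hinj : Function.Injective ev := by
    suffices hker : LinearMap.ker ev = ⊥ from LinearMap.ker_eq_bot.mp hker
    rw [Submodule.eq_bot_iff]
    have hrep : ∀ x : TensorProduct ℂ V0 Wt,
        ∃ w : Fin (Module.finrank ℂ Wt) → V0, x = ∑ i, w i ⊗ₜ (Module.finBasis ℂ Wt) i := by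
      intro x
      set b := Module.finBasis ℂ Wt
      induction x using TensorProduct.induction_on with
      | zero => exact ⟨0, by simp⟩
      | tmul v f =>
        refine ⟨fun i => (b.repr f) i • v, ?_⟩
        conv_lhs => rw [← Basis.sum_repr b f]
        rw [TensorProduct.tmul_sum]
        exact Finset.sum_congr rfl fun i _ => (TensorProduct.smul_tmul _ _ _).symm
      | add x y hx hy =>
        obtain ⟨w1, rfl⟩ := hx
        obtain ⟨w2, rfl⟩ := hy
        exact ⟨w1 + w2, by rw [← Finset.sum_add_distrib]; simp [TensorProduct.add_tmul]⟩
    intro x hx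
    obtain ⟨w, rfl⟩ := hrep x
    rw [LinearMap.mem_ker, map_sum] at hx
    have hsum : ∑ i, ((Module.finBasis ℂ Wt i : Wt) : V0 →ₗ[ℂ] M) (w i) = 0 := by
      exact Eq.trans (Finset.sum_congr rfl fun i _ => rfl) hx
    have hli : LinearIndependent ℂ (fun i => ((Module.finBasis ℂ Wt i : Wt) : V0 →ₗ[ℂ] M)) :=
      (Module.finBasis ℂ Wt).linearIndependent.map' Wt.subtype (Submodule.ker_subtype _)
    have hz := ProdRep.key σ hσ (Module.finrank ℂ M) M (ProdRep.ρG ρ) le_rfl _ _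
      hli (fun i g v => (Module.finBasis ℂ Wt i).2 g v) w hsum
    simp only [hz]
    simp
  set e : TensorProduct ℂ V0 Wt ≃ₗ[ℂ] M :=
    LinearEquiv.ofBijective ev ⟨hinj, LinearMap.range_eq_top.mp hsurj⟩ with he
  have heval : ∀ x, e x = ev x := fun x => rfl
  -- τ is irreducible
  have hτ : τ.IsIrreducible' := by
    refine ⟨hWnt, fun U hU => ?_⟩
    by_contra hcon
    push_neg at hcon
    obtain ⟨hUbot, hUtop⟩ := hcon
    set lT : TensorProduct ℂ V0 U →ₗ[ℂ] TensorProduct ℂ V0 Wt :=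
      LinearMap.lTensor V0 U.subtype with hlT
    have hlT_tmul : ∀ (v : V0) (u : U), lT (v ⊗ₜ u) = v ⊗ₜ (u : Wt) := fun v u => rfl
    have hrInv : ∀ (g : G) (h : H), ∀ y ∈ LinearMap.range lT,
        ((σ.extTprod τ) (g, h)) y ∈ LinearMap.range lT := by
      rintro g h y ⟨x, rfl⟩
      induction x using TensorProduct.induction_on with
      | zero => exact ⟨0, by simp⟩
      | tmul v u =>
        refine ⟨σ g v ⊗ₜ ⟨τ h (u : Wt), hU h _ u.2⟩, ?_⟩
        rw [hlT_tmul, hlT_tmul, extTprod_tmul]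
      | add x y hx hy =>
        rw [map_add, map_add]
        exact Submodule.add_mem _ hx hy
    set D : Submodule ℂ M := Submodule.map ev (LinearMap.range lT) with hD
    have hDinv : ∀ (gh : G × H), ∀ m ∈ D, ρ gh m ∈ D := by
      rintro ⟨g, h⟩ m ⟨y, hy, rfl⟩
      exact ⟨(σ.extTprod τ) (g, h) y, hrInv g h y hy, ProdRep.ev_equi ρ V0 hV0inv g h y⟩
    -- D is not ⊥
    obtain ⟨u0, hu0U, hu0ne⟩ := (Submodule.ne_bot_iff _).mp hUbot
    have hu0fne : ((u0 : Wt) : V0 →ₗ[ℂ] M) ≠ 0 := by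
      intro h
      exact hu0ne (by exact_mod_cast Subtype.ext h)
    obtain ⟨va, hva⟩ := DFunLike.ne_iff.mp hu0fne
    have hDne : D ≠ ⊥ := by
      intro h
      apply hva
      have : ev (lT (va ⊗ₜ ⟨u0, hu0U⟩)) ∈ D := ⟨_, ⟨_, rfl⟩, rfl⟩
      rw [h, Submodule.mem_bot] at this
      exact this
    -- D is not ⊤
    obtain ⟨f0, hf0⟩ : ∃ f : Wt, f ∉ U := by
      by_contra h
      push_neg at h
      exact hUtop (Submodule.eq_top_iff'.mpr h)
    obtain ⟨φ, hφne, hφU⟩ := Submodule.exists_dual_map_eq_bot_of_notMem hf0 inferInstance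
    set L : TensorProduct ℂ V0 Wt →ₗ[ℂ] V0 :=
      (TensorProduct.rid ℂ V0).toLinearMap ∘ₗ LinearMap.lTensor V0 φ with hL
    have hLzero : ∀ y ∈ LinearMap.range lT, L y = 0 := by
      rintro y ⟨x, rfl⟩
      induction x using TensorProduct.induction_on with
      | zero => simp
      | tmul v u =>
        rw [hlT_tmul, hL]
        simp only [LinearMap.comp_apply, LinearMap.lTensor_tmul]
        have : φ (u : Wt) = 0 := by
          have : φ (u : Wt) ∈ U.map φ := ⟨(u : Wt), u.2, rfl⟩
          rwa [hφU, Submodule.mem_bot] at this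
        rw [this]
        simp
      | add x y hx hy =>
        rw [map_add, map_add, hx, hy, add_zero]
    have hDnetop : D ≠ ⊤ := by
      intro h
      have : ev (v1 ⊗ₜ f0) ∈ D := by rw [h]; trivial
      obtain ⟨y, hy, hyev⟩ := this
      have : y = v1 ⊗ₜ f0 := hinj hyev
      rw [this] at hy
      have h0 := hLzero _ hy
      rw [hL] at h0
      simp only [LinearMap.comp_apply, LinearMap.lTensor_tmul, LinearEquiv.coe_coe,
        TensorProduct.rid_tmul] at h0
      exact smul_ne_zero hφne hv1 h0
    rcases hρ.2 D hDinv with h | h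
    · exact hDne h
    · exact hDnetop h
  -- assemble
  refine ⟨V0, Wt, inferInstance, inferInstance, inferInstance, inferInstance, σ, τ,
    inferInstance, inferInstance, hσ, hτ, ⟨e.symm, ?_⟩⟩
  rintro ⟨g, h⟩ m
  apply e.injective
  rw [e.apply_symm_apply]
  have : e ((σ.extTprod τ) (g, h) (e.symm m)) = ρ (g, h) (e (e.symm m)) := by
    rw [heval, heval]
    exact ProdRep.ev_equi ρ V0 hV0inv g h (e.symm m)
  rw [this, e.apply_symm_apply]
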